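/- arXiv:2406.04831 — 4 statements merged into one kernel-verified Lean document; each statement's English description precedes it below -/
import Mathlib

section
/- Let W : ℝ^{d×d} → [0,∞] satisfy: (i) frame indifference W(RF)=W(F) for R ∈ SO(d); (ii) α dist²(F,SO(d)) ≤ W(F) for all F, and W(F) ≤ β dist²(F,SO(d)) when dist²(F,SO(d)) ≤ ρ; (iii) |W(I+G) − Q(G)| ≤ |G|² r(|G|) with r increasing and r(δ)→0 as δ→0, where Q is a quadratic form. Then Q satisfies α|sym G|² ≤ Q(G) ≤ β|sym G|² for all G ∈ ℝ^{d×d}. -/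
/-- Frobenius norm of a matrix. -/
noncomputable def frobNorm {d : ℕ} (A : Matrix (Fin d) (Fin d) ℝ) : ℝ :=
  Real.sqrt (∑ i, ∑ j, (A i j) ^ 2)

/-- Symmetric part of a matrix. -/
noncomputable def symMat {d : ℕ} (G : Matrix (Fin d) (Fin d) ℝ) : Matrix (Fin d) (Fin d) ℝ :=
  (1 / 2 : ℝ) • (G + G.transpose)

/-- The special orthogonal group `SO(d)` as a set of matrices. -/
def SOset (d : ℕ) : Set (Matrix (Fin d) (Fin d) ℝ) :=
  {R | R.transpose * R = 1 ∧ R.det = 1}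

/-- Frobenius distance of a matrix to `SO(d)`. -/
noncomputable def distSO {d : ℕ} (F : Matrix (Fin d) (Fin d) ℝ) : ℝ :=
  sInf ((fun R => frobNorm (F - R)) '' SOset d)

section aux
open scoped Matrix
attribute [local instance] Matrix.frobeniusSeminormedAddCommGroup Matrix.frobeniusNormedAddCommGroup
  Matrix.frobeniusIsBoundedSMul Matrix.frobeniusNormSMulClass Matrix.frobeniusNormedSpace Matrix.frobeniusNormedRing
  Matrix.frobeniusNormedAlgebra

variable {d : ℕ}

local notation "M" => Matrix (Fin d) (Fin d) ℝ

lemma frob_eq (A : M) : frobNorm A = ‖A‖ := by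
  rw [frobNorm, Matrix.frobenius_norm_def, Real.sqrt_eq_rpow]
  congr 1
  refine Finset.sum_congr rfl fun i _ => Finset.sum_congr rfl fun j _ => ?_
  rw [Real.norm_eq_abs, Real.rpow_two, sq_abs]

lemma symMat_smul (c : ℝ) (A : M) : symMat (c • A) = c • symMat A := by
  simp only [symMat, Matrix.transpose_smul, smul_add]
  module

lemma symMat_one : symMat (1 : M) = 1 := by
  simp only [symMat, Matrix.transpose_one]
  module

lemma symMat_decomp (A : M) : (1 : M) + A - (1 + (A - symMat A)) = symMat A := by abel

lemma norm_symMat_le (A : M) : ‖symMat A‖ ≤ ‖A‖ := by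
  calc ‖symMat A‖ = ‖(1/2 : ℝ) • (A + Aᵀ)‖ := rfl
    _ = |(1/2 : ℝ)| * ‖A + Aᵀ‖ := by rw [norm_smul, Real.norm_eq_abs]
    _ ≤ (1/2) * (‖A‖ + ‖Aᵀ‖) := by
        rw [abs_of_pos (by norm_num : (0:ℝ) < 1/2)]
        gcongr
        exact norm_add_le _ _
    _ = ‖A‖ := by rw [Matrix.frobenius_norm_transpose]; ring

lemma skew_part (A : M) : (A - symMat A)ᵀ = -(A - symMat A) := by
  simp only [symMat, Matrix.transpose_sub, Matrix.transpose_smul, Matrix.transpose_add,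
    Matrix.transpose_transpose]
  module

lemma norm_one_sub_symMat {R : M} (hR : Rᵀ * R = 1) :
    ‖(1 : M) - symMat R‖ ≤ 1/2 * ‖(1 : M) - R‖^2 := by
  have hRR : R * Rᵀ = 1 := mul_eq_one_comm.mp hR
  have key : (1 : M) - symMat R = (1/2 : ℝ) • (((1 : M) - R) * ((1 : M) - R)ᵀ) := by
    have expand : ((1 : M) - R) * ((1 : M) - R)ᵀ = 1 - R - Rᵀ + R * Rᵀ := by
      simp only [Matrix.transpose_sub, Matrix.transpose_one]
      noncomm_ring
    rw [expand, hRR, symMat]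
    module
  rw [key, norm_smul, Real.norm_eq_abs, abs_of_pos (by norm_num : (0:ℝ) < 1/2)]
  have := Matrix.frobenius_norm_mul ((1 : M) - R) ((1 : M) - R)ᵀ
  rw [Matrix.frobenius_norm_transpose] at this
  nlinarith [norm_nonneg ((1:M) - R)]

lemma SO_one : (1 : M) ∈ SOset d := ⟨by simp, by simp⟩

lemma distSO_le (F : M) {R : M} (hR : R ∈ SOset d) : distSO F ≤ frobNorm (F - R) := by
  apply csInf_le
  · exact ⟨0, fun x hx => by
      obtain ⟨R', _, rfl⟩ := hx
      exact Real.sqrt_nonneg _⟩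
  · exact ⟨R, hR, rfl⟩

lemma le_distSO {F : M} {c : ℝ} (hc : ∀ R ∈ SOset d, c ≤ frobNorm (F - R)) : c ≤ distSO F := by
  refine le_csInf ⟨_, ⟨1, SO_one, rfl⟩⟩ ?_
  rintro x ⟨R', hR', rfl⟩
  exact hc R' hR'

lemma distSO_nonneg (F : M) : 0 ≤ distSO F :=
  le_distSO fun R _ => Real.sqrt_nonneg _

end aux

section expstuff
open scoped Matrix
open NormedSpace
attribute [local instance] Matrix.frobeniusSeminormedAddCommGroup Matrix.frobeniusNormedAddCommGroup
  Matrix.frobeniusIsBoundedSMul Matrix.frobeniusNormSMulClass Matrix.frobeniusNormedSpace Matrix.frobeniusNormedRing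
  Matrix.frobeniusNormedAlgebra

variable {d : ℕ}
local notation "M" => Matrix (Fin d) (Fin d) ℝ

lemma exp_skew_mem_SO {S : M} (hS : Sᵀ = -S) : exp S ∈ SOset d := by
  have htr : (exp S)ᵀ = exp Sᵀ := by
    simp_rw [exp_eq_tsum (𝕂 := ℝ), Matrix.transpose_tsum, Matrix.transpose_smul, Matrix.transpose_pow]
  have horth : (exp S)ᵀ * exp S = 1 := by
    erw [htr, hS, ← exp_add_of_commute (Commute.refl S).neg_left, neg_add_cancel, exp_zero]
  refine ⟨horth, ?_⟩
  have hsq : (exp S).det ^ 2 = 1 := by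
    have := congrArg Matrix.det horth
    rwa [Matrix.det_mul, Matrix.det_transpose, ← sq, Matrix.det_one] at this
  have hpos : 0 ≤ (exp S).det := by
    have h2 : exp S = exp ((2⁻¹ : ℝ) • S) * exp ((2⁻¹ : ℝ) • S) := by
      erw [← exp_add_of_commute (Commute.refl _)]
      congr 1
      module
    rw [h2, Matrix.det_mul]
    exact mul_self_nonneg _
  nlinarith

set_option maxHeartbeats 1000000 in
lemma exp_remainder {X : M} (hX : ‖X‖ ≤ 1) : ‖exp X - 1 - X‖ ≤ 3 * ‖X‖ ^ 2 := by
  have hs := exp_series_hasSum_exp' (𝕂 := ℝ) X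
  set f : ℕ → M := fun n => ((n.factorial : ℝ))⁻¹ • X ^ n with hf
  have hf0 : ∑ i ∈ Finset.range 2, f i = 1 + X := by
    simp [hf, Finset.sum_range_succ, Nat.factorial]
  have h2 : HasSum (fun n => f (n + 2)) (exp X - (1 + X)) := by
    rw [hasSum_nat_add_iff 2, hf0, sub_add_cancel]
    exact hs
  have hXn : 0 ≤ ‖X‖ := norm_nonneg X
  have hnorm : ∀ n : ℕ, ‖f (n + 2)‖ ≤ ‖X‖ ^ 2 * ((n.factorial : ℝ))⁻¹ := by
    intro n
    rw [hf, norm_smul, Real.norm_eq_abs, abs_of_nonneg (by positivity)]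
    have h1 : ‖X ^ (n + 2)‖ ≤ ‖X‖ ^ (n + 2) := norm_pow_le' X (Nat.succ_pos _)
    have h2' : ‖X‖ ^ (n + 2) ≤ ‖X‖ ^ 2 := by
      rw [pow_add, mul_comm]
      have : ‖X‖ ^ n ≤ 1 := pow_le_one₀ hXn hX
      nlinarith [pow_nonneg hXn 2, pow_nonneg hXn n]
    have h3 : (((n+2).factorial : ℝ))⁻¹ ≤ ((n.factorial : ℝ))⁻¹ := by
      apply inv_anti₀
      · exact_mod_cast Nat.factorial_pos n
      · exact_mod_cast Nat.factorial_le (by omega)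
    calc (((n+2).factorial : ℝ))⁻¹ * ‖X ^ (n + 2)‖ ≤ ((n.factorial : ℝ))⁻¹ * ‖X‖ ^ 2 := by
          apply mul_le_mul h3 (h1.trans h2') (norm_nonneg _) (by positivity)
      _ = ‖X‖ ^ 2 * ((n.factorial : ℝ))⁻¹ := mul_comm _ _
  have hsum2 : Summable fun n => ‖f (n + 2)‖ :=
    (summable_nat_add_iff 2).mpr (norm_expSeries_summable' (𝕂 := ℝ) X)
  have hfact : Summable fun n : ℕ => ((n.factorial : ℝ))⁻¹ := by
    have := expSeries_summable' (𝕂 := ℝ) (𝔸 := ℝ) 1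
    simpa using this
  have hsumR : Summable fun n : ℕ => ‖X‖ ^ 2 * ((n.factorial : ℝ))⁻¹ := hfact.mul_left _
  have hbound : ‖exp X - (1 + X)‖ ≤ ∑' n : ℕ, ‖X‖ ^ 2 * ((n.factorial : ℝ))⁻¹ := by
    calc ‖exp X - (1 + X)‖ = ‖∑' n, f (n + 2)‖ := by rw [h2.tsum_eq]
      _ ≤ ∑' n, ‖f (n + 2)‖ := norm_tsum_le_tsum_norm hsum2
      _ ≤ _ := Summable.tsum_le_tsum hnorm hsum2 hsumR
  have htsum : ∑' n : ℕ, ‖X‖ ^ 2 * ((n.factorial : ℝ))⁻¹ = ‖X‖ ^ 2 * Real.exp 1 := by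
    rw [tsum_mul_left]
    congr 1
    rw [Real.exp_eq_exp_ℝ, exp_eq_tsum (𝕂 := ℝ)]
    simp
  have hexp1 : Real.exp 1 ≤ 3 := by
    have := Real.exp_one_lt_d9
    linarith
  rw [sub_sub]
  calc ‖exp X - (1 + X)‖ ≤ ‖X‖ ^ 2 * Real.exp 1 := htsum ▸ hbound
    _ ≤ 3 * ‖X‖ ^ 2 := by nlinarith [pow_nonneg hXn 2]

lemma rot_approx {S : M} (hS : Sᵀ = -S) (hle : ‖S‖ ≤ 1) :
    ∃ R ∈ SOset d, ‖1 + S - R‖ ≤ 3 * ‖S‖ ^ 2 := by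
  refine ⟨exp S, exp_skew_mem_SO hS, ?_⟩
  have h := exp_remainder hle
  have : (1 : M) + S - exp S = -(exp S - 1 - S) := by abel
  rw [this, norm_neg]
  exact h

end expstuff

section mainsec
open scoped Matrix
attribute [local instance] Matrix.frobeniusSeminormedAddCommGroup Matrix.frobeniusNormedAddCommGroup
  Matrix.frobeniusIsBoundedSMul Matrix.frobeniusNormSMulClass Matrix.frobeniusNormedSpace Matrix.frobeniusNormedRing
  Matrix.frobeniusNormedAlgebra

variable {d : ℕ}
local notation "M" => Matrix (Fin d) (Fin d) ℝ

lemma dist_lower {h : ℝ} (hh : 0 ≤ h) (G : M) {R : M} (hR : R ∈ SOset d) :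
    h * ‖symMat G‖ - 2 * h ^ 2 * ‖G‖ ^ 2 ≤ ‖(1 : M) + h • G - R‖ := by
  obtain ⟨hRo, -⟩ := hR
  have hsymA : symMat ((1 : M) + h • G - R) = h • symMat G + ((1 : M) - symMat R) := by
    simp only [symMat, Matrix.transpose_sub, Matrix.transpose_add, Matrix.transpose_smul,
      Matrix.transpose_one]
    module
  have h1 : ‖symMat ((1 : M) + h • G - R)‖ ≤ ‖(1 : M) + h • G - R‖ := norm_symMat_le _
  have h2 : h * ‖symMat G‖ - ‖(1 : M) - symMat R‖ ≤ ‖symMat ((1 : M) + h • G - R)‖ := by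
    have e : h • symMat G = symMat ((1 : M) + h • G - R) - ((1 : M) - symMat R) := by
      rw [hsymA]; abel
    have htri := norm_sub_le (symMat ((1 : M) + h • G - R)) ((1 : M) - symMat R)
    rw [← e, norm_smul, Real.norm_eq_abs, abs_of_nonneg hh] at htri
    linarith
  have h3 : ‖(1 : M) - symMat R‖ ≤ 1 / 2 * ‖(1 : M) - R‖ ^ 2 := norm_one_sub_symMat hRo
  have h4 : ‖(1 : M) - R‖ - h * ‖G‖ ≤ ‖(1 : M) + h • G - R‖ := by
    have e : (1 : M) - R = ((1 : M) + h • G - R) - h • G := by abel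
    have htri := norm_sub_le ((1 : M) + h • G - R) (h • G)
    rw [← e, norm_smul, Real.norm_eq_abs, abs_of_nonneg hh] at htri
    linarith
  have hs_le : ‖symMat G‖ ≤ ‖G‖ := norm_symMat_le G
  have ht : 0 ≤ ‖(1 : M) - R‖ := norm_nonneg _
  have hg : 0 ≤ ‖G‖ := norm_nonneg _
  have hs0 : 0 ≤ ‖symMat G‖ := norm_nonneg _
  by_cases hcase : ‖(1 : M) - R‖ ≤ 2 * h * ‖G‖
  · nlinarith [mul_self_le_mul_self ht hcase]
  · push_neg at hcase
    nlinarith [mul_nonneg (mul_nonneg hh hh) (mul_nonneg hg hg),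
      mul_le_mul_of_nonneg_left hs_le hh]

lemma le_of_eps {a b : ℝ} (h : ∀ ε : ℝ, 0 < ε → a ≤ b + ε) : a ≤ b := by
  by_contra hc
  push_neg at hc
  have := h ((a - b) / 2) (by linarith)
  linarith

end mainsec

section final
open scoped Matrix
attribute [local instance] Matrix.frobeniusSeminormedAddCommGroup Matrix.frobeniusNormedAddCommGroup
  Matrix.frobeniusIsBoundedSMul Matrix.frobeniusNormSMulClass Matrix.frobeniusNormedSpace Matrix.frobeniusNormedRing
  Matrix.frobeniusNormedAlgebra

private lemma arith_hb1 {g rv eps : ℝ} (h0 : 0 ≤ rv) (h1 : rv * (2 * (g ^ 2 + 1)) ≤ eps) :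
    g ^ 2 * rv ≤ eps / 2 := by nlinarith

private lemma arith_dist2 {h s g D : ℝ} (hh : 0 ≤ h) (hs0 : 0 ≤ s) (hg0 : 0 ≤ g)
    (hd : h * s - 2 * h ^ 2 * g ^ 2 ≤ D) (hD : 0 ≤ D) :
    h ^ 2 * s ^ 2 - 4 * h ^ 3 * s * g ^ 2 ≤ D ^ 2 := by
  by_cases hx : 0 ≤ h * s - 2 * h ^ 2 * g ^ 2
  · nlinarith [mul_self_le_mul_self hx hd, sq_nonneg (h ^ 2 * g ^ 2)]
  · push_neg at hx
    nlinarith [mul_le_mul_of_nonneg_left hx.le (mul_nonneg hh hs0),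
      mul_nonneg (mul_nonneg (mul_nonneg hh (mul_nonneg hh hh)) hs0) (sq_nonneg g)]

private lemma arith_hb2' {h β s c eps : ℝ} (hh : 0 ≤ h) (hh1 : h ≤ 1) (hβ : 0 ≤ β)
    (hs0 : 0 ≤ s) (hc0 : 0 ≤ c)
    (hK : h * (β * (6 * s * c ^ 2 + 9 * c ^ 4) + 1) ≤ eps / 2) :
    β * (s + 3 * h * c ^ 2) ^ 2 ≤ β * s ^ 2 + eps / 2 := by
  nlinarith [mul_nonneg (mul_nonneg (mul_nonneg hh (sub_nonneg.mpr hh1)) hβ)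
    (pow_nonneg hc0 4), mul_nonneg (mul_nonneg hβ hs0) (sq_nonneg c)]

set_option maxHeartbeats 1000000 in
/-- If `W` is frame indifferent, non-degenerate (two-sided bound by `dist²(·, SO(d))` near
`SO(d)`) and admits the quadratic expansion `|W(I+G) − Q(G)| ≤ |G|² r(|G|)` with `r`
increasing and `r(δ) → 0` as `δ → 0`, then the quadratic form `Q` satisfies
`α |sym G|² ≤ Q(G) ≤ β |sym G|²`. -/
theorem stmt5 {d : ℕ} (α β ρ : ℝ) (hα : 0 < α) (hαβ : α ≤ β) (hρ : 0 < ρ)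
    (W : Matrix (Fin d) (Fin d) ℝ → ℝ) (hW0 : ∀ F, 0 ≤ W F)
    (hframe : ∀ R ∈ SOset d, ∀ F, W (R * F) = W F)
    (hlow : ∀ F, α * distSO F ^ 2 ≤ W F)
    (hup : ∀ F, distSO F ^ 2 ≤ ρ → W F ≤ β * distSO F ^ 2)
    (Q : QuadraticForm ℝ (Matrix (Fin d) (Fin d) ℝ))
    (r : ℝ → ℝ) (hr0 : ∀ t, 0 ≤ r t) (hrmono : Monotone r)
    (hrlim : Filter.Tendsto r (nhdsWithin 0 (Set.Ici 0)) (nhds 0))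
    (hexp : ∀ G, |W (1 + G) - Q G| ≤ frobNorm G ^ 2 * r (frobNorm G)) :
    ∀ G, α * frobNorm (symMat G) ^ 2 ≤ Q G ∧ Q G ≤ β * frobNorm (symMat G) ^ 2 := by
  have hβ : 0 < β := lt_of_lt_of_le hα hαβ
  have hr' : ∀ ε : ℝ, 0 < ε → ∃ δ : ℝ, 0 < δ ∧ ∀ t : ℝ, 0 ≤ t → t ≤ δ → r t ≤ ε := by
    intro ε hε
    rw [Metric.tendsto_nhdsWithin_nhds] at hrlim
    obtain ⟨δ, hδpos, hδ⟩ := hrlim ε hε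
    refine ⟨δ / 2, by linarith, fun t ht htδ => ?_⟩
    have h1 : dist t 0 < δ := by
      rw [Real.dist_eq, sub_zero, abs_of_nonneg ht]; linarith
    have h2 := hδ (Set.mem_Ici.mpr ht) h1
    rw [Real.dist_eq, sub_zero] at h2
    exact (le_abs_self _).trans h2.le
  intro G
  simp only [frob_eq] at hexp ⊢
  set g := ‖G‖ with hgdef
  set s := ‖symMat G‖ with hsdef
  have hg0 : 0 ≤ g := norm_nonneg _
  have hs0 : 0 ≤ s := norm_nonneg _
  have hsg : s ≤ g := norm_symMat_le G
  clear_value g s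
  constructor
  · -- lower bound
    apply le_of_eps
    intro ε hε
    have hgp : (0:ℝ) < g + 1 := by linarith
    have hg2p : (0:ℝ) < g ^ 2 + 1 := by positivity
    have hK0 : (0:ℝ) ≤ 4 * α * s * g ^ 2 :=
      mul_nonneg (mul_nonneg (mul_nonneg (by norm_num) hα.le) hs0) (sq_nonneg g)
    obtain ⟨δ, hδpos, hδ⟩ := hr' (ε / (2 * (g ^ 2 + 1))) (div_pos hε (by linarith))
    set h := min (δ / (g + 1)) (min 1 (ε / (2 * (4 * α * s * g ^ 2 + 1)))) with hhdef
    have hh : 0 < h :=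
      lt_min (div_pos hδpos hgp) (lt_min one_pos (div_pos hε (by linarith)))
    have hh1 : h ≤ 1 := le_trans (min_le_right _ _) (min_le_left _ _)
    have hhδ : h * g ≤ δ := by
      have h1 : h ≤ δ / (g + 1) := min_le_left _ _
      have h2 := (le_div_iff₀ hgp).mp h1
      linarith [mul_nonneg hh.le hg0, hh.le]
    have hhK : h * (4 * α * s * g ^ 2 + 1) ≤ ε / 2 := by
      have h1 : h ≤ ε / (2 * (4 * α * s * g ^ 2 + 1)) :=
        le_trans (min_le_right _ _) (min_le_right _ _)
      have h2 := (le_div_iff₀ (by linarith : (0:ℝ) < 2 * (4 * α * s * g ^ 2 + 1))).mp h1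
      linarith
    clear_value h
    have hrb : r (h * g) ≤ ε / (2 * (g ^ 2 + 1)) := hδ _ (mul_nonneg hh.le hg0) hhδ
    have hd : h * s - 2 * h ^ 2 * g ^ 2 ≤ distSO (1 + h • G) := by
      apply le_distSO
      intro R hR
      rw [frob_eq, hgdef, hsdef]
      exact dist_lower hh.le G hR
    have hd0 : 0 ≤ distSO (1 + h • G) := distSO_nonneg _
    have hd2 : h ^ 2 * s ^ 2 - 4 * h ^ 3 * s * g ^ 2 ≤ distSO (1 + h • G) ^ 2 :=
      arith_dist2 hh.le hs0 hg0 hd hd0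
    have hW := hlow (1 + h • G)
    have habs := hexp (h • G)
    rw [norm_smul, Real.norm_eq_abs, abs_of_nonneg hh.le, ← hgdef] at habs
    have hQsmul : Q (h • G) = h * h * Q G := by
      rw [QuadraticMap.map_smul, smul_eq_mul]
    rw [hQsmul] at habs
    have habs' : W (1 + h • G) ≤ h * h * Q G + (h * g) ^ 2 * r (h * g) := by
      linarith [(abs_le.mp habs).2]
    have hchain : α * (h ^ 2 * s ^ 2 - 4 * h ^ 3 * s * g ^ 2) ≤
        h ^ 2 * (Q G + g ^ 2 * r (h * g)) := by
      calc α * (h ^ 2 * s ^ 2 - 4 * h ^ 3 * s * g ^ 2)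
          ≤ α * distSO (1 + h • G) ^ 2 := mul_le_mul_of_nonneg_left hd2 hα.le
        _ ≤ W (1 + h • G) := hW
        _ ≤ h * h * Q G + (h * g) ^ 2 * r (h * g) := habs'
        _ = h ^ 2 * (Q G + g ^ 2 * r (h * g)) := by ring
    have hdiv : α * s ^ 2 - 4 * α * h * s * g ^ 2 ≤ Q G + g ^ 2 * r (h * g) := by
      have h2 : (0:ℝ) < h ^ 2 := pow_pos hh 2
      have e : h ^ 2 * (α * s ^ 2 - 4 * α * h * s * g ^ 2) ≤
          h ^ 2 * (Q G + g ^ 2 * r (h * g)) := by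
        calc h ^ 2 * (α * s ^ 2 - 4 * α * h * s * g ^ 2)
            = α * (h ^ 2 * s ^ 2 - 4 * h ^ 3 * s * g ^ 2) := by ring
          _ ≤ _ := hchain
      exact le_of_mul_le_mul_left e h2
    have hb1 : g ^ 2 * r (h * g) ≤ ε / 2 :=
      arith_hb1 (hr0 _) ((le_div_iff₀ (by linarith : (0:ℝ) < 2 * (g ^ 2 + 1))).mp hrb)
    have hb2 : 4 * α * h * s * g ^ 2 ≤ ε / 2 := by linarith [hh.le]
    linarith
  · -- upper bound
    apply le_of_eps
    intro ε hε
    have hgp : (0:ℝ) < g + 1 := by linarith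
    have hg2p : (0:ℝ) < g ^ 2 + 1 := by positivity
    obtain ⟨δ, hδpos, hδ⟩ := hr' (ε / (2 * (g ^ 2 + 1))) (div_pos hε (by linarith))
    set c := ‖G - symMat G‖ with hcdef
    have hc0 : 0 ≤ c := norm_nonneg _
    clear_value c
    have hcp : (0:ℝ) < c + 1 := by linarith
    have hK0 : (0:ℝ) ≤ β * (6 * s * c ^ 2 + 9 * c ^ 4) :=
      mul_nonneg hβ.le (add_nonneg
        (mul_nonneg (mul_nonneg (by norm_num) hs0) (sq_nonneg c))
        (mul_nonneg (by norm_num) (pow_nonneg hc0 4)))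
    set h := min (δ / (g + 1)) (min 1 (min (ε / (2 * (β * (6 * s * c ^ 2 + 9 * c ^ 4) + 1)))
      (min (1 / (c + 1)) (ρ / (g ^ 2 + 1))))) with hhdef
    have hh : 0 < h :=
      lt_min (div_pos hδpos hgp) (lt_min one_pos (lt_min (div_pos hε (by linarith))
        (lt_min (div_pos one_pos hcp) (div_pos hρ hg2p))))
    have hh1 : h ≤ 1 := le_trans (min_le_right _ _) (min_le_left _ _)
    have hhδ : h * g ≤ δ := by
      have h1 : h ≤ δ / (g + 1) := min_le_left _ _
      have h2 := (le_div_iff₀ hgp).mp h1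
      linarith [mul_nonneg hh.le hg0, hh.le]
    have hhK : h * (β * (6 * s * c ^ 2 + 9 * c ^ 4) + 1) ≤ ε / 2 := by
      have h1 : h ≤ ε / (2 * (β * (6 * s * c ^ 2 + 9 * c ^ 4) + 1)) :=
        le_trans (min_le_right _ _) (le_trans (min_le_right _ _) (min_le_left _ _))
      have h2 := (le_div_iff₀ (by linarith :
        (0:ℝ) < 2 * (β * (6 * s * c ^ 2 + 9 * c ^ 4) + 1))).mp h1
      linarith
    have hhc : h * c ≤ 1 := by
      have h1 : h ≤ 1 / (c + 1) :=
        le_trans (min_le_right _ _) (le_trans (min_le_right _ _)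
          (le_trans (min_le_right _ _) (min_le_left _ _)))
      have h2 := (le_div_iff₀ hcp).mp h1
      linarith [hh.le]
    have hhρ : h ^ 2 * g ^ 2 ≤ ρ := by
      have h1 : h ≤ ρ / (g ^ 2 + 1) :=
        le_trans (min_le_right _ _) (le_trans (min_le_right _ _)
          (le_trans (min_le_right _ _) (min_le_right _ _)))
      have h2 := (le_div_iff₀ hg2p).mp h1
      linarith [mul_nonneg (mul_nonneg hh.le (sub_nonneg.mpr hh1)) (sq_nonneg g)]
    clear_value h
    have hrb : r (h * g) ≤ ε / (2 * (g ^ 2 + 1)) := hδ _ (mul_nonneg hh.le hg0) hhδ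
    have hskew : (h • (G - symMat G))ᵀ = -(h • (G - symMat G)) := by
      rw [Matrix.transpose_smul, skew_part, smul_neg]
    have hSnorm : ‖h • (G - symMat G)‖ = h * c := by
      rw [norm_smul, Real.norm_eq_abs, abs_of_nonneg hh.le, ← hcdef]
    obtain ⟨R, hRSO, hRb⟩ := rot_approx hskew (by rw [hSnorm]; exact hhc)
    rw [hSnorm] at hRb
    have hdu : distSO (1 + h • G) ≤ h * s + 3 * (h * c) ^ 2 := by
      have e : (1 : Matrix (Fin d) (Fin d) ℝ) + h • G - R =
          (1 + h • (G - symMat G) - R) + h • symMat G := by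
        rw [smul_sub]; abel
      calc distSO (1 + h • G) ≤ frobNorm (1 + h • G - R) := distSO_le _ hRSO
        _ = ‖(1 : Matrix (Fin d) (Fin d) ℝ) + h • G - R‖ := frob_eq _
        _ ≤ ‖(1 : Matrix (Fin d) (Fin d) ℝ) + h • (G - symMat G) - R‖ + ‖h • symMat G‖ := by
            rw [e]; exact norm_add_le _ _
        _ ≤ h * s + 3 * (h * c) ^ 2 := by
            rw [norm_smul, Real.norm_eq_abs, abs_of_nonneg hh.le, ← hsdef]; linarith
    have hd0 : 0 ≤ distSO (1 + h • G) := distSO_nonneg _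
    have hdg : distSO (1 + h • G) ≤ h * g := by
      calc distSO (1 + h • G) ≤ frobNorm (1 + h • G - 1) := distSO_le _ SO_one
        _ = ‖h • G‖ := by rw [frob_eq]; congr 1; abel
        _ = h * g := by rw [norm_smul, Real.norm_eq_abs, abs_of_nonneg hh.le, ← hgdef]
    have hρ2 : distSO (1 + h • G) ^ 2 ≤ ρ := by
      calc distSO (1 + h • G) ^ 2 ≤ (h * g) ^ 2 := pow_le_pow_left₀ hd0 hdg 2
        _ = h ^ 2 * g ^ 2 := by ring
        _ ≤ ρ := hhρ
    have hWu := hup (1 + h • G) hρ2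
    have hd2 : distSO (1 + h • G) ^ 2 ≤ (h * s + 3 * (h * c) ^ 2) ^ 2 :=
      pow_le_pow_left₀ hd0 hdu 2
    have habs := hexp (h • G)
    rw [norm_smul, Real.norm_eq_abs, abs_of_nonneg hh.le, ← hgdef] at habs
    have hQsmul : Q (h • G) = h * h * Q G := by
      rw [QuadraticMap.map_smul, smul_eq_mul]
    rw [hQsmul] at habs
    have habs' : h * h * Q G ≤ W (1 + h • G) + (h * g) ^ 2 * r (h * g) := by
      linarith [(abs_le.mp habs).1]
    have hchain : h ^ 2 * Q G ≤ h ^ 2 * (β * (s + 3 * h * c ^ 2) ^ 2 + g ^ 2 * r (h * g)) := by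
      calc h ^ 2 * Q G = h * h * Q G := by ring
        _ ≤ W (1 + h • G) + (h * g) ^ 2 * r (h * g) := habs'
        _ ≤ β * distSO (1 + h • G) ^ 2 + (h * g) ^ 2 * r (h * g) := by linarith
        _ ≤ β * (h * s + 3 * (h * c) ^ 2) ^ 2 + (h * g) ^ 2 * r (h * g) := by
            linarith [mul_le_mul_of_nonneg_left hd2 hβ.le]
        _ = h ^ 2 * (β * (s + 3 * h * c ^ 2) ^ 2 + g ^ 2 * r (h * g)) := by ring
    have hdiv : Q G ≤ β * (s + 3 * h * c ^ 2) ^ 2 + g ^ 2 * r (h * g) :=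
      le_of_mul_le_mul_left hchain (pow_pos hh 2)
    have hb1 : g ^ 2 * r (h * g) ≤ ε / 2 :=
      arith_hb1 (hr0 _) ((le_div_iff₀ (by linarith : (0:ℝ) < 2 * (g ^ 2 + 1))).mp hrb)
    have hb2 : β * (s + 3 * h * c ^ 2) ^ 2 ≤ β * s ^ 2 + ε / 2 :=
      arith_hb2' hh.le hh1 hβ.le hs0 hc0 hhK
    linarith
end final
end

section
/- Let m, d ∈ ℕ, γ > 0, Q ⊂ ℝ^d a cube, and E, F ⊂ Q measurable with |E|, |F| ≥ γ|Q|. There exists c = c(γ, m, d) such that for every polynomial P : ℝ^d → ℝ of degree at most m and every 1 ≤ p ≤ ∞: ‖P‖_{L^p(F)} ≤ c ‖P‖_{L^p(E)}. -/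
open MeasureTheory MvPolynomial Topology Filter
open scoped ENNReal

lemma mv_zero_set : ∀ (d : ℕ) (P : MvPolynomial (Fin d) ℝ), P ≠ 0 →
    volume {x : Fin d → ℝ | MvPolynomial.eval x P = 0} = 0 := by
  intro d
  induction d with
  | zero =>
    intro P hP
    obtain ⟨a, rfl⟩ := MvPolynomial.C_surjective (Fin 0) P
    have ha : a ≠ 0 := fun h => hP (by simp [h])
    have : {x : Fin 0 → ℝ | MvPolynomial.eval x (MvPolynomial.C a) = 0} = ∅ := by
      ext x; simp [ha]
    rw [this]; simp
  | succ n ih =>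
    intro P hP
    set Pq := MvPolynomial.finSuccEquiv ℝ n P with hPq
    have hPq0 : Pq ≠ 0 := by
      intro h
      apply hP
      exact (map_eq_zero_iff _ (AlgEquiv.injective _)).mp h
    obtain ⟨k, hk⟩ : ∃ k, Pq.coeff k ≠ 0 := by
      by_contra h
      push_neg at h
      exact hPq0 (Polynomial.ext fun k => by simp [h k])
    set c := Pq.coeff k with hc
    set N : Set (Fin n → ℝ) := {y | MvPolynomial.eval y c = 0} with hN
    have hNmeas : MeasurableSet N := by
      exact (MvPolynomial.continuous_eval c).measurable (measurableSet_singleton 0)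
    have hNnull : volume N = 0 := ih c hk
    -- product space
    set e := MeasurableEquiv.piFinSuccAbove (fun _ : Fin (n+1) => ℝ) 0 with he
    have hmp : MeasurePreserving e volume volume :=
      volume_preserving_piFinSuccAbove (fun _ : Fin (n + 1) => ℝ) 0
    set S' : Set (ℝ × (Fin n → ℝ)) :=
      {p | MvPolynomial.eval (Fin.cons p.1 p.2) P = 0} with hS'
    have hS'meas : MeasurableSet S' := by
      have hcont : Continuous fun p : ℝ × (Fin n → ℝ) =>
          MvPolynomial.eval (Fin.cons p.1 p.2 : Fin (n+1) → ℝ) P := by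
        apply (MvPolynomial.continuous_eval P).comp
        exact (continuous_pi fun i => Fin.cases continuous_fst
          (fun j => (continuous_apply j).comp continuous_snd) i)
      exact hcont.measurable (measurableSet_singleton 0)
    have key : {x : Fin (n+1) → ℝ | MvPolynomial.eval x P = 0} = e ⁻¹' S' := by
      ext x
      simp only [Set.mem_setOf_eq, Set.mem_preimage, hS']
      have : (Fin.cons (e x).1 (e x).2 : Fin (n+1) → ℝ) = x := by
        ext i
        refine Fin.cases ?_ (fun j => ?_) i
        · rfl
        · rfl
      rw [this]
    rw [key]
    have : volume (e ⁻¹' S') = volume S' := hmp.measure_preimage hS'meas.nullMeasurableSet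
    rw [this]
    -- now split S'
    have hsub : S' ⊆ (Set.univ ×ˢ N) ∪ (S' ∩ {p | p.2 ∉ N}) := by
      intro p hp
      by_cases h : p.2 ∈ N
      · exact Or.inl ⟨trivial, h⟩
      · exact Or.inr ⟨hp, h⟩
    refine le_antisymm ?_ zero_le
    refine le_trans (measure_mono hsub) ?_
    refine le_trans (measure_union_le _ _) ?_
    have h1 : volume (Set.univ ×ˢ N : Set (ℝ × (Fin n → ℝ))) = 0 := by
      rw [MeasureTheory.Measure.volume_eq_prod, Measure.prod_prod, hNnull, mul_zero]
    have h2 : volume (S' ∩ {p | p.2 ∉ N}) = 0 := by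
      rw [MeasureTheory.Measure.volume_eq_prod]
      have hmeas2 : MeasurableSet (S' ∩ {p : ℝ × (Fin n → ℝ) | p.2 ∉ N}) :=
        hS'meas.inter ((hNmeas.preimage measurable_snd).compl)
      rw [Measure.prod_apply_symm hmeas2]
      have : ∀ y : Fin n → ℝ,
          volume ((fun x => (x, y)) ⁻¹' (S' ∩ {p : ℝ × (Fin n → ℝ) | p.2 ∉ N})) = 0 := by
        intro y
        by_cases hy : y ∈ N
        · have : ((fun x => (x, y)) ⁻¹' (S' ∩ {p : ℝ × (Fin n → ℝ) | p.2 ∉ N})) = ∅ := by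
            ext t; simp [hy]
          simp [this]
        · have hmapne : Polynomial.map (MvPolynomial.eval y) Pq ≠ 0 := by
            intro h
            apply hy
            have : (Polynomial.map (MvPolynomial.eval y) Pq).coeff k = 0 := by rw [h]; simp
            rw [Polynomial.coeff_map] at this
            exact this
          have hfin : {t : ℝ | Polynomial.IsRoot (Polynomial.map (MvPolynomial.eval y) Pq) t}.Finite :=
            Polynomial.finite_setOf_isRoot hmapne
          refine measure_mono_null ?_ (hfin.measure_zero volume)
          intro t ht
          obtain ⟨ht1, _⟩ := ht
          have := MvPolynomial.eval_eq_eval_mv_eval' y t P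
          simp only [Set.mem_setOf_eq, hS'] at ht1 ⊢
          rw [this] at ht1
          exact ht1
      simp only [this]
      simp
    rw [h1, h2, add_zero]


noncomputable def Phi (d m : ℕ) (c : (Fin d → Fin (m+1)) → ℝ) (x : Fin d → ℝ) : ℝ :=
  ∑ e : Fin d → Fin (m+1), c e * ∏ i, x i ^ (e i : ℕ)

noncomputable def fsn (d m : ℕ) (e : Fin d → Fin (m+1)) : Fin d →₀ ℕ :=
  Finsupp.equivFunOnFinite.symm (fun i => (e i : ℕ))

lemma fsn_inj (d m : ℕ) : Function.Injective (fsn d m) := by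
  intro a b h
  funext i
  have : (fsn d m a : Fin d → ℕ) i = (fsn d m b : Fin d → ℕ) i := by rw [h]
  simpa [fsn, Fin.ext_iff] using this

lemma eval_monomial_fsn (d m : ℕ) (e : Fin d → Fin (m+1)) (a : ℝ) (x : Fin d → ℝ) :
    eval x (monomial (fsn d m e) a) = a * ∏ i, x i ^ (e i : ℕ) := by
  rw [eval_monomial]
  congr 1
  rw [Finsupp.prod_fintype]
  · rfl
  · intro i; simp

lemma Phi_eq_eval (d m : ℕ) (c : (Fin d → Fin (m+1)) → ℝ) (x : Fin d → ℝ) :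
    Phi d m c x = eval x (∑ e : Fin d → Fin (m+1), monomial (fsn d m e) (c e)) := by
  rw [map_sum]
  exact Finset.sum_congr rfl fun e _ => (eval_monomial_fsn d m e (c e) x).symm

lemma Phi_poly_ne_zero (d m : ℕ) (c : (Fin d → Fin (m+1)) → ℝ) (hc : c ≠ 0) :
    (∑ e : Fin d → Fin (m+1), monomial (fsn d m e) (c e)) ≠ 0 := by
  obtain ⟨e0, he0⟩ := Function.ne_iff.mp hc
  intro h
  have hcoeff : coeff (fsn d m e0) (∑ e : Fin d → Fin (m+1), monomial (fsn d m e) (c e))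
      = c e0 := by
    rw [coeff_sum]
    rw [Finset.sum_congr rfl (fun e _ => coeff_monomial (fsn d m e0) (fsn d m e) (c e))]
    have heq : ∀ e : Fin d → Fin (m+1),
        (if fsn d m e = fsn d m e0 then c e else 0) = if e = e0 then c e else 0 := by
      intro e
      simp [Function.Injective.eq_iff (fsn_inj d m)]
    rw [Finset.sum_congr rfl (fun e _ => heq e)]
    simp
  rw [h, coeff_zero] at hcoeff
  exact he0 hcoeff.symm

lemma Phi_cont (d m : ℕ) (c : (Fin d → Fin (m+1)) → ℝ) : Continuous (Phi d m c) := by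
  apply continuous_finset_sum
  intro e _
  exact continuous_const.mul (continuous_finset_prod _ fun i _ => (continuous_apply i).pow _)

lemma Phi_smul (d m : ℕ) (c : (Fin d → Fin (m+1)) → ℝ) (a : ℝ) (x : Fin d → ℝ) :
    Phi d m (a • c) x = a * Phi d m c x := by
  simp [Phi, Finset.mul_sum, mul_assoc]

lemma Phi_bound (d m : ℕ) (c : (Fin d → Fin (m+1)) → ℝ) (x : Fin d → ℝ)
    (hx : x ∈ Set.univ.pi (fun _ : Fin d => Set.Icc (0:ℝ) 1)) :
    |Phi d m c x| ≤ (Fintype.card (Fin d → Fin (m+1)) : ℝ) * ‖c‖ := by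
  refine le_trans (Finset.abs_sum_le_sum_abs _ _) ?_
  have : ∀ e : Fin d → Fin (m+1), |c e * ∏ i, x i ^ (e i : ℕ)| ≤ ‖c‖ := by
    intro e
    rw [abs_mul]
    have h1 : |c e| ≤ ‖c‖ := by
      have := norm_le_pi_norm c e
      simpa using this
    have h2 : |∏ i, x i ^ (e i : ℕ)| ≤ 1 := by
      rw [Finset.abs_prod]
      refine Finset.prod_le_one (fun i _ => abs_nonneg _) fun i _ => ?_
      rw [abs_pow]
      refine pow_le_one₀ (abs_nonneg _) ?_
      have := hx i (Set.mem_univ i)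
      rw [abs_le]
      constructor <;> [linarith [this.1]; exact this.2]
    calc |c e| * |∏ i, x i ^ (e i : ℕ)| ≤ ‖c‖ * 1 :=
      mul_le_mul h1 h2 (abs_nonneg _) (norm_nonneg c)
    _ = ‖c‖ := mul_one _
  refine le_trans (Finset.sum_le_sum fun e _ => this e) ?_
  rw [Finset.sum_const, Finset.card_univ, nsmul_eq_mul]

lemma exists_rep (d m : ℕ) (P : MvPolynomial (Fin d) ℝ) (hP : P.totalDegree ≤ m) :
    ∃ c : (Fin d → Fin (m+1)) → ℝ, ∀ x, eval x P = Phi d m c x := by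
  refine ⟨fun e => P.coeff (fsn d m e), fun x => ?_⟩
  have himg : P.support ⊆ Finset.univ.image (fsn d m) := by
    intro s hs
    have hsle : ∀ i, s i ≤ m := by
      intro i
      by_cases h0 : s i = 0
      · simp [h0]
      have hi : i ∈ s.support := Finsupp.mem_support_iff.mpr h0
      have h1 : s i ≤ s.sum fun _ e => e :=
        Finset.single_le_sum (fun j _ => Nat.zero_le (s j)) hi
      exact le_trans h1 (le_trans (le_totalDegree hs) hP)
    refine Finset.mem_image.mpr ⟨fun i => ⟨s i, Nat.lt_succ_of_le (hsle i)⟩, Finset.mem_univ _, ?_⟩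
    ext i
    simp [fsn]
  have key : (∑ s ∈ P.support, monomial s (P.coeff s)) =
      ∑ e : Fin d → Fin (m+1), monomial (fsn d m e) (P.coeff (fsn d m e)) := by
    have h3 : ∑ e : Fin d → Fin (m+1), monomial (fsn d m e) (P.coeff (fsn d m e))
        = ∑ s ∈ Finset.univ.image (fsn d m), monomial s (P.coeff s) :=
      (Finset.sum_image (f := fun s => monomial s (P.coeff s)) (fun a _ b _ h => fsn_inj d m h)).symm
    rw [h3]
    refine Finset.sum_subset himg fun s _ hs => ?_
    rw [notMem_support_iff.mp hs, map_zero]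
  conv_lhs => rw [P.as_sum]
  rw [key, ← Phi_eq_eval]

lemma totalDegree_comp_le (d : ℕ) (x0 : Fin d → ℝ) (l : ℝ) (P : MvPolynomial (Fin d) ℝ) :
    (aeval (fun i => C (x0 i) + C l * X i) P).totalDegree ≤ P.totalDegree := by
  set g : Fin d → MvPolynomial (Fin d) ℝ := fun i => C (x0 i) + C l * X i with hg
  have hgdeg : ∀ i, (g i).totalDegree ≤ 1 := by
    intro i
    refine le_trans (totalDegree_add _ _) (max_le (by simp [totalDegree_C]) ?_)
    refine le_trans (totalDegree_mul _ _) ?_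
    simp [totalDegree_C, totalDegree_X]
  have hsum := congrArg (aeval g) P.as_sum
  rw [map_sum] at hsum
  rw [hsum]
  refine le_trans (totalDegree_finset_sum _ _) (Finset.sup_le fun v hv => ?_)
  rw [aeval_monomial]
  refine le_trans (totalDegree_mul _ _) ?_
  have h1 : (algebraMap ℝ (MvPolynomial (Fin d) ℝ) (P.coeff v)).totalDegree = 0 :=
    totalDegree_C _
  rw [h1, zero_add]
  rw [Finsupp.prod]
  refine le_trans (totalDegree_finset_prod _ _) ?_
  have h2 : ∀ i ∈ v.support, (g i ^ v i).totalDegree ≤ v i := by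
    intro i _
    refine le_trans (totalDegree_pow _ _) ?_
    calc v i * (g i).totalDegree ≤ v i * 1 := Nat.mul_le_mul_left _ (hgdeg i)
    _ = v i := mul_one _
  refine le_trans (Finset.sum_le_sum h2) ?_
  exact le_totalDegree hv


lemma Phi_zero_vol (d m : ℕ) (c : (Fin d → Fin (m+1)) → ℝ) (hc : c ≠ 0) :
    volume {x : Fin d → ℝ | Phi d m c x = 0} = 0 := by
  have hset : {x : Fin d → ℝ | Phi d m c x = 0} =
      {x : Fin d → ℝ | MvPolynomial.eval x
        (∑ e : Fin d → Fin (m+1), MvPolynomial.monomial (fsn d m e) (c e)) = 0} := by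
    ext x
    simp only [Set.mem_setOf_eq, ← Phi_eq_eval]
  rw [hset]
  exact mv_zero_set d _ (Phi_poly_ne_zero d m c hc)


noncomputable abbrev Q0 (d : ℕ) : Set (Fin d → ℝ) :=
  Set.univ.pi (fun _ : Fin d => Set.Icc (0:ℝ) 1)

lemma Q0_compact (d : ℕ) : IsCompact (Q0 d) :=
  isCompact_univ_pi fun _ => isCompact_Icc

lemma Q0_meas (d : ℕ) : MeasurableSet (Q0 d) :=
  MeasurableSet.univ_pi fun _ => measurableSet_Icc

lemma Q0_vol (d : ℕ) : volume (Q0 d) = 1 := by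
  rw [volume_pi_pi]
  simp [Real.volume_Icc]

lemma phi_sub (d m : ℕ) (c c' : (Fin d → Fin (m+1)) → ℝ) (x : Fin d → ℝ) :
    Phi d m c x - Phi d m c' x = Phi d m (c - c') x := by
  simp [Phi, sub_mul, Finset.sum_sub_distrib]

theorem key_unit (d m : ℕ) (γ' : ℝ) (hγ0 : 0 < γ') (hγ1 : γ' ≤ 1) :
    ∃ ε > (0:ℝ), ∀ E : Set (Fin d → ℝ), MeasurableSet E →
      E ⊆ Q0 d → ENNReal.ofReal γ' ≤ volume E →
      ∀ c : (Fin d → Fin (m+1)) → ℝ, ε * ‖c‖ ≤ ∫ x in E, |Phi d m c x| := by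
  classical
  set K : ℝ := (Fintype.card (Fin d → Fin (m+1)) : ℝ) with hK
  have hK0 : 0 ≤ K := Nat.cast_nonneg _
  set S : Set (Set (Fin d → ℝ)) :=
    {E | MeasurableSet E ∧ E ⊆ Q0 d ∧ ENNReal.ofReal γ' ≤ volume E} with hS
  have hQ0S : Q0 d ∈ S :=
    ⟨Q0_meas d, le_refl _, by rw [Q0_vol]; exact ENNReal.ofReal_le_one.mpr hγ1⟩
  have hvol_le : ∀ E ∈ S, volume E ≤ 1 := by
    intro E hE
    calc volume E ≤ volume (Q0 d) := measure_mono hE.2.1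
    _ = 1 := Q0_vol d
  have hvol_ne : ∀ E ∈ S, volume E ≠ ⊤ := by
    intro E hE
    exact ne_top_of_le_ne_top ENNReal.one_ne_top (hvol_le E hE)
  have hint : ∀ (c) (E), E ∈ S → IntegrableOn (fun x => |Phi d m c x|) E volume := by
    intro c E hE
    exact (((Phi_cont d m c).abs.continuousOn.integrableOn_compact (Q0_compact d)).mono_set hE.2.1)
  set If : ((Fin d → Fin (m+1)) → ℝ) → Set (Fin d → ℝ) → ℝ :=
    fun c E => ∫ x in E, |Phi d m c x| with hIf
  have hIf_nonneg : ∀ c E, 0 ≤ If c E := fun c E => integral_nonneg fun x => abs_nonneg _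
  set Θ : ((Fin d → Fin (m+1)) → ℝ) → ℝ := fun c => sInf ((If c) '' S) with hΘ
  have hbdd : ∀ c, BddBelow ((If c) '' S) := by
    intro c
    exact ⟨0, fun r ⟨E, _, hre⟩ => hre ▸ hIf_nonneg c E⟩
  have hne : ∀ c, ((If c) '' S).Nonempty := fun c => ⟨If c (Q0 d), ⟨Q0 d, hQ0S, rfl⟩⟩
  have hΘ_le : ∀ c, ∀ E ∈ S, Θ c ≤ If c E := fun c E hE => csInf_le (hbdd c) ⟨E, hE, rfl⟩
  have hΘ_nonneg : ∀ c, 0 ≤ Θ c := fun c => le_csInf (hne c) fun r ⟨E, _, hre⟩ =>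
    hre ▸ hIf_nonneg c E
  -- Lipschitz property
  have hIflip : ∀ c c', ∀ E ∈ S, If c E ≤ If c' E + K * ‖c - c'‖ := by
    intro c c' E hE
    have hpt : ∀ x ∈ E, |Phi d m c x| ≤ |Phi d m c' x| + K * ‖c - c'‖ := by
      intro x hx
      have h1 : |Phi d m c x| - |Phi d m c' x| ≤ |Phi d m c x - Phi d m c' x| :=
        abs_sub_abs_le_abs_sub _ _
      rw [phi_sub] at h1
      have h2 := Phi_bound d m (c - c') x (hE.2.1 hx)
      linarith
    have hconst : IntegrableOn (fun _ : Fin d → ℝ => K * ‖c - c'‖) E volume :=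
      integrableOn_const (lt_of_le_of_lt (hvol_le E hE) ENNReal.one_lt_top).ne
    calc If c E ≤ ∫ x in E, (|Phi d m c' x| + K * ‖c - c'‖) :=
      setIntegral_mono_on (hint c E hE) ((hint c' E hE).add hconst) hE.1 hpt
    _ = If c' E + ∫ _ in E, K * ‖c - c'‖ := integral_add (hint c' E hE) hconst
    _ = If c' E + (volume E).toReal • (K * ‖c - c'‖) := by rw [setIntegral_const]; rfl
    _ ≤ If c' E + 1 * (K * ‖c - c'‖) := by
        refine add_le_add le_rfl ?_
        rw [smul_eq_mul]
        refine mul_le_mul_of_nonneg_right ?_ (by positivity)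
        refine ENNReal.toReal_le_of_le_ofReal zero_le_one ?_
        simpa using hvol_le E hE
    _ = If c' E + K * ‖c - c'‖ := by rw [one_mul]
  have hΘlip : ∀ c c', Θ c ≤ Θ c' + K * ‖c - c'‖ := by
    intro c c'
    rw [← sub_le_iff_le_add]
    refine le_csInf (hne c') ?_
    rintro r ⟨E, hE, rfl⟩
    rw [sub_le_iff_le_add]
    exact le_trans (hΘ_le c E hE) (hIflip c c' E hE)
  have hΘcont : Continuous Θ := by
    refine (LipschitzWith.of_dist_le_mul (K := Real.toNNReal K) ?_).continuous
    intro c c'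
    rw [Real.dist_eq, dist_eq_norm, abs_le]
    have h1 := hΘlip c c'
    have h2 := hΘlip c' c
    rw [Real.coe_toNNReal _ hK0]
    have : ‖c' - c‖ = ‖c - c'‖ := norm_sub_rev _ _
    constructor <;> nlinarith
  -- positivity on the sphere
  have hΘpos : ∀ c : (Fin d → Fin (m+1)) → ℝ, ‖c‖ = 1 → 0 < Θ c := by
    intro c hc1
    have hc0 : c ≠ 0 := by intro h; rw [h] at hc1; simp at hc1
    set A : ℕ → Set (Fin d → ℝ) := fun j => {x ∈ Q0 d | |Phi d m c x| ≤ 1 / (j + 1)} with hA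
    have hAmeas : ∀ j, MeasurableSet (A j) := by
      intro j
      exact (Q0_meas d).inter ((Phi_cont d m c).abs.measurable measurableSet_Iic)
    have hAanti : Antitone A := by
      intro j k hjk x hx
      refine ⟨hx.1, le_trans hx.2 ?_⟩
      have : (j:ℝ) + 1 ≤ (k:ℝ) + 1 := by exact_mod_cast Nat.add_le_add_right hjk 1
      exact one_div_le_one_div_of_le (by positivity) this
    have hAint : ⋂ j, A j ⊆ {x | Phi d m c x = 0} := by
      intro x hx
      simp only [Set.mem_iInter] at hx
      have : |Phi d m c x| ≤ 0 := by
        refine ge_of_tendsto' tendsto_one_div_add_atTop_nhds_zero_nat fun j => ?_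
        exact (hx j).2
      simpa [abs_nonpos_iff] using this
    have htend : Filter.Tendsto (fun j => volume (A j)) Filter.atTop (𝓝 (volume (⋂ j, A j))) :=
      tendsto_measure_iInter_atTop (fun j => (hAmeas j).nullMeasurableSet) hAanti
        ⟨0, ne_top_of_le_ne_top ENNReal.one_ne_top
          (le_trans (measure_mono fun x hx => hx.1) (le_of_eq (Q0_vol d)))⟩
    have hint0 : volume (⋂ j, A j) = 0 :=
      measure_mono_null hAint (Phi_zero_vol d m c hc0)
    rw [hint0] at htend
    have hpos2 : (0:ℝ≥0∞) < ENNReal.ofReal (γ'/2) := ENNReal.ofReal_pos.mpr (by linarith)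
    obtain ⟨j, hj⟩ := (htend.eventually (Iio_mem_nhds hpos2)).exists
    -- Now lower bound Θ c
    have hlow : ∀ E ∈ S, (1/((j:ℝ)+1)) * (γ'/2) ≤ If c E := by
      intro E hE
      set E' := E \ A j with hE'
      have hE'meas : MeasurableSet E' := hE.1.diff (hAmeas j)
      have hE'vol : ENNReal.ofReal (γ'/2) ≤ volume E' := by
        have hsplit : volume E ≤ volume E' + volume (A j) := by
          refine le_trans (measure_mono ?_) (measure_union_le E' (A j))
          intro x hx
          by_cases h : x ∈ A j
          · exact Or.inr h
          · exact Or.inl ⟨hx, h⟩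
        have h1 : ENNReal.ofReal (γ'/2) + ENNReal.ofReal (γ'/2) ≤
            volume E' + ENNReal.ofReal (γ'/2) := by
          calc ENNReal.ofReal (γ'/2) + ENNReal.ofReal (γ'/2) = ENNReal.ofReal γ' := by
                rw [← ENNReal.ofReal_add (by linarith) (by linarith)]; norm_num
          _ ≤ volume E := hE.2.2
          _ ≤ volume E' + volume (A j) := hsplit
          _ ≤ volume E' + ENNReal.ofReal (γ'/2) := add_le_add le_rfl (le_of_lt hj)
        exact (ENNReal.add_le_add_iff_right ENNReal.ofReal_ne_top).mp h1
      have hE'ne : volume E' ≠ ⊤ :=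
        ne_top_of_le_ne_top (hvol_ne E hE) (measure_mono Set.diff_subset)
      have hlb : ∀ x ∈ E', 1/((j:ℝ)+1) ≤ |Phi d m c x| := by
        intro x hx
        by_contra hcon
        push_neg at hcon
        exact hx.2 ⟨hE.2.1 hx.1, le_of_lt hcon⟩
      have h3 : (1/((j:ℝ)+1)) * (volume E').toReal ≤ ∫ x in E', |Phi d m c x| :=
        setIntegral_ge_of_const_le_real hE'meas hE'ne hlb ((hint c E hE).mono_set Set.diff_subset)
      have h4 : γ'/2 ≤ (volume E').toReal := by
        have := ENNReal.toReal_mono hE'ne hE'vol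
        rwa [ENNReal.toReal_ofReal (by linarith)] at this
      have h5 : ∫ x in E', |Phi d m c x| ≤ If c E := by
        refine setIntegral_mono_set (hint c E hE) ?_ ?_
        · exact Filter.Eventually.of_forall fun x => abs_nonneg _
        · exact HasSubset.Subset.eventuallyLE Set.diff_subset
      calc (1/((j:ℝ)+1)) * (γ'/2) ≤ (1/((j:ℝ)+1)) * (volume E').toReal :=
        mul_le_mul_of_nonneg_left h4 (by positivity)
      _ ≤ ∫ x in E', |Phi d m c x| := h3
      _ ≤ If c E := h5
    have : (1/((j:ℝ)+1)) * (γ'/2) ≤ Θ c := by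
      refine le_csInf (hne c) ?_
      rintro r ⟨E, hE, rfl⟩
      exact hlow E hE
    refine lt_of_lt_of_le ?_ this
    positivity
  -- compactness
  have hsph_compact : IsCompact (Metric.sphere (0 : (Fin d → Fin (m+1)) → ℝ) 1) :=
    isCompact_sphere 0 1
  have hsph_ne : (Metric.sphere (0 : (Fin d → Fin (m+1)) → ℝ) 1).Nonempty :=
    NormedSpace.sphere_nonempty.mpr zero_le_one
  obtain ⟨c0, hc0mem, hc0min⟩ :=
    hsph_compact.exists_isMinOn hsph_ne hΘcont.continuousOn
  have hc0norm : ‖c0‖ = 1 := by simpa using mem_sphere_zero_iff_norm.mp hc0mem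
  set ε := Θ c0 with hε
  have hεpos : 0 < ε := hΘpos c0 hc0norm
  refine ⟨ε, hεpos, ?_⟩
  intro E hEmeas hEsub hEvol c
  have hES : E ∈ S := ⟨hEmeas, hEsub, hEvol⟩
  by_cases hc : c = 0
  · rw [hc]
    simpa using hIf_nonneg 0 E
  · set u := ‖c‖⁻¹ • c with hu
    have hunorm : ‖u‖ = 1 := norm_smul_inv_norm hc
    have h1 : ε ≤ Θ u := hc0min (mem_sphere_zero_iff_norm.mpr hunorm)
    have h2 : Θ u ≤ If u E := hΘ_le u E hES
    have h3 : If u E = ‖c‖⁻¹ * If c E := by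
      rw [hIf]
      simp only
      rw [← integral_const_mul]
      refine setIntegral_congr_fun hEmeas fun x _ => ?_
      rw [hu, Phi_smul, abs_mul, abs_of_nonneg (by positivity)]
    have hcpos : 0 < ‖c‖ := norm_pos_iff.mpr hc
    have := le_trans h1 (le_trans h2 (le_of_eq h3))
    calc ε * ‖c‖ ≤ (‖c‖⁻¹ * If c E) * ‖c‖ := mul_le_mul_of_nonneg_right this (norm_nonneg c)
    _ = If c E := by field_simp


theorem cube0 (d m : ℕ) (γ' : ℝ) (hγ0 : 0 < γ') (hγ1 : γ' ≤ 1) :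
    ∃ C > (0:ℝ), ∀ E F : Set (Fin d → ℝ), MeasurableSet E → MeasurableSet F →
      E ⊆ Q0 d → F ⊆ Q0 d → ENNReal.ofReal γ' ≤ volume E → ENNReal.ofReal γ' ≤ volume F →
      ∀ c : (Fin d → Fin (m+1)) → ℝ, ∀ p : ℝ≥0∞, 1 ≤ p →
        eLpNorm (Phi d m c) p (volume.restrict F) ≤
          ENNReal.ofReal C * eLpNorm (Phi d m c) p (volume.restrict E) := by
  obtain ⟨ε, hε, hkey⟩ := key_unit d m γ' hγ0 hγ1
  set K : ℝ := (Fintype.card (Fin d → Fin (m+1)) : ℝ) with hKdef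
  have hK0 : 0 ≤ K := Nat.cast_nonneg _
  refine ⟨(K + 1) / ε, by positivity, ?_⟩
  intro E F hEm hFm hEs hFs hEv hFv c p hp
  have hp0 : p ≠ 0 := by intro h; rw [h] at hp; simp at hp
  -- upper bound on F
  have hFvol_le : volume F ≤ 1 := le_trans (measure_mono hFs) (le_of_eq (Q0_vol d))
  have hup : eLpNorm (Phi d m c) p (volume.restrict F) ≤ ENNReal.ofReal ((K+1) * ‖c‖) := by
    have hbd : ∀ᵐ x ∂(volume.restrict F), ‖Phi d m c x‖ ≤ (K+1) * ‖c‖ := by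
      refine ae_restrict_of_forall_mem hFm fun x hx => ?_
      rw [Real.norm_eq_abs]
      refine le_trans (Phi_bound d m c x (hFs hx)) ?_
      have : 0 ≤ ‖c‖ := norm_nonneg c
      nlinarith
    refine le_trans (eLpNorm_le_of_ae_bound hbd) ?_
    have h1 : (volume.restrict F) Set.univ ≤ 1 := by
      rw [Measure.restrict_apply_univ]; exact hFvol_le
    have h2 : (volume.restrict F) Set.univ ^ (p.toReal)⁻¹ ≤ 1 :=
      ENNReal.rpow_le_one h1 (by positivity)
    calc (volume.restrict F) Set.univ ^ (p.toReal)⁻¹ * ENNReal.ofReal ((K+1) * ‖c‖)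
        ≤ 1 * ENNReal.ofReal ((K+1) * ‖c‖) := mul_le_mul_left h2 _
    _ = ENNReal.ofReal ((K+1) * ‖c‖) := one_mul _
  -- lower bound on E
  have hEvol_le : volume E ≤ 1 := le_trans (measure_mono hEs) (le_of_eq (Q0_vol d))
  have hintE : IntegrableOn (Phi d m c) E volume :=
    ((Phi_cont d m c).continuousOn.integrableOn_compact (Q0_compact d)).mono_set hEs
  have hlow : ENNReal.ofReal (ε * ‖c‖) ≤ eLpNorm (Phi d m c) p (volume.restrict E) := by
    have h1 : ENNReal.ofReal (ε * ‖c‖) ≤ ENNReal.ofReal (∫ x in E, ‖Phi d m c x‖) := by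
      refine ENNReal.ofReal_le_ofReal ?_
      simpa [Real.norm_eq_abs] using hkey E hEm hEs hEv c
    have h2 : ENNReal.ofReal (∫ x in E, ‖Phi d m c x‖) =
        eLpNorm (Phi d m c) 1 (volume.restrict E) := by
      rw [ofReal_integral_norm_eq_lintegral_enorm hintE, eLpNorm_one_eq_lintegral_enorm]
    have h3 : eLpNorm (Phi d m c) 1 (volume.restrict E) ≤
        eLpNorm (Phi d m c) p (volume.restrict E) *
          (volume.restrict E) Set.univ ^ (1/(1:ℝ≥0∞).toReal - 1/p.toReal) := by
      exact eLpNorm_le_eLpNorm_mul_rpow_measure_univ hp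
        (Phi_cont d m c).aestronglyMeasurable.restrict
    have h4 : (volume.restrict E) Set.univ ^ (1/(1:ℝ≥0∞).toReal - 1/p.toReal) ≤ 1 := by
      refine ENNReal.rpow_le_one ?_ ?_
      · rw [Measure.restrict_apply_univ]; exact hEvol_le
      · simp only [ENNReal.toReal_one]
        rcases eq_or_ne p ∞ with h | h
        · simp [h]
        · have hp1 : 1 ≤ p.toReal := ENNReal.toReal_one ▸ ENNReal.toReal_mono h hp
          have : 1/p.toReal ≤ 1 := by
            rw [div_le_one (by linarith)]; linarith
          linarith
    calc ENNReal.ofReal (ε * ‖c‖) ≤ eLpNorm (Phi d m c) 1 (volume.restrict E) := h2 ▸ h1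
    _ ≤ eLpNorm (Phi d m c) p (volume.restrict E) *
          (volume.restrict E) Set.univ ^ (1/(1:ℝ≥0∞).toReal - 1/p.toReal) := h3
    _ ≤ eLpNorm (Phi d m c) p (volume.restrict E) * 1 := mul_le_mul_right h4 _
    _ = eLpNorm (Phi d m c) p (volume.restrict E) := mul_one _
  -- combine
  calc eLpNorm (Phi d m c) p (volume.restrict F) ≤ ENNReal.ofReal ((K+1) * ‖c‖) := hup
  _ = ENNReal.ofReal (((K+1)/ε) * (ε * ‖c‖)) := by
      congr 1; field_simp
  _ = ENNReal.ofReal ((K+1)/ε) * ENNReal.ofReal (ε * ‖c‖) :=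
      ENNReal.ofReal_mul (by positivity)
  _ ≤ ENNReal.ofReal ((K+1)/ε) * eLpNorm (Phi d m c) p (volume.restrict E) :=
      mul_le_mul_right hlow _


lemma aeval_eq_eval' {d : ℕ} (y : Fin d → ℝ) (q : MvPolynomial (Fin d) ℝ) :
    aeval y q = eval y q := by
  rw [aeval_def, Algebra.algebraMap_self]
  rfl

set_option maxHeartbeats 1000000 in
/-- Polynomial norm comparison on subsets of a cube of definite measure fraction: for
`m, d, γ` there is `c = c(γ, m, d) > 0` such that for every cube `Q ⊂ ℝ^d`, all measurable
`E, F ⊆ Q` with `|E|, |F| ≥ γ|Q|`, every polynomial `P` of degree at most `m` and every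
`1 ≤ p ≤ ∞`, one has `‖P‖_{L^p(F)} ≤ c ‖P‖_{L^p(E)}`. -/
theorem stmt13 (d m : ℕ) (γ : ℝ) (hγ : 0 < γ) :
    ∃ c > (0 : ℝ), ∀ (x0 : Fin d → ℝ) (l : ℝ), 0 < l →
      ∀ E F : Set (Fin d → ℝ), MeasurableSet E → MeasurableSet F →
        E ⊆ Set.univ.pi (fun i => Set.Icc (x0 i) (x0 i + l)) →
        F ⊆ Set.univ.pi (fun i => Set.Icc (x0 i) (x0 i + l)) →
        ENNReal.ofReal γ * volume (Set.univ.pi (fun i => Set.Icc (x0 i) (x0 i + l)))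
          ≤ volume E →
        ENNReal.ofReal γ * volume (Set.univ.pi (fun i => Set.Icc (x0 i) (x0 i + l)))
          ≤ volume F →
        ∀ P : MvPolynomial (Fin d) ℝ, P.totalDegree ≤ m →
          ∀ p : ℝ≥0∞, 1 ≤ p →
            eLpNorm (fun x => MvPolynomial.eval x P) p (volume.restrict F)
              ≤ ENNReal.ofReal c *
                eLpNorm (fun x => MvPolynomial.eval x P) p (volume.restrict E) := by
  set γ' := min γ 1 with hγ'def
  have hγ'0 : 0 < γ' := lt_min hγ one_pos
  have hγ'1 : γ' ≤ 1 := min_le_right _ _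
  obtain ⟨Cst, hCst, hcube⟩ := cube0 d m γ' hγ'0 hγ'1
  refine ⟨Cst, hCst, ?_⟩
  intro x0 l hl E F hEm hFm hEs hFs hEv hFv P hPdeg p hp
  set Q : Set (Fin d → ℝ) := Set.univ.pi (fun i => Set.Icc (x0 i) (x0 i + l)) with hQdef
  set A : (Fin d → ℝ) → (Fin d → ℝ) := fun y => x0 + l • y with hAdef
  have hA_apply : ∀ y i, A y i = x0 i + l * y i := fun y i => rfl
  have hAmeas : Measurable A := (measurable_const_smul l).const_add x0
  -- volume of Q
  have hQvol : volume Q = ENNReal.ofReal (l ^ d) := by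
    rw [hQdef, volume_pi_pi]
    simp only [Real.volume_Icc, add_sub_cancel_left]
    rw [Finset.prod_const, Finset.card_univ, Fintype.card_fin, ← ENNReal.ofReal_pow hl.le]
  -- scaling of volume
  have hld : (0:ℝ) < l ^ d := by positivity
  set κ : ℝ≥0∞ := ENNReal.ofReal (l ^ d) with hκdef
  have hκ0 : κ ≠ 0 := (ENNReal.ofReal_pos.mpr hld).ne'
  have hκtop : κ ≠ ⊤ := ENNReal.ofReal_ne_top
  have hmap : Measure.map A volume = ENNReal.ofReal ((l ^ d)⁻¹) • volume := by
    have h1 : Measure.map A volume =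
        Measure.map (fun z : Fin d → ℝ => x0 + z)
          (Measure.map (fun y : Fin d → ℝ => l • y) volume) := by
      rw [Measure.map_map (measurable_const_add x0) (measurable_const_smul l)]
      rfl
    rw [h1, MeasureTheory.Measure.map_addHaar_smul volume hl.ne']
    rw [Measure.map_smul]
    rw [map_add_left_eq_self]
    congr 1
    rw [Module.finrank_fin_fun]
    rw [abs_of_nonneg (by positivity)]
  have hpreim : ∀ S : Set (Fin d → ℝ), MeasurableSet S →
      volume (A ⁻¹' S) = ENNReal.ofReal ((l ^ d)⁻¹) * volume S := by
    intro S hS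
    rw [← Measure.map_apply hAmeas hS, hmap, Measure.smul_apply, smul_eq_mul]
  have hMP : MeasurePreserving A (κ • volume) volume := by
    refine ⟨hAmeas, ?_⟩
    rw [Measure.map_smul, hmap, smul_smul, hκdef, ← ENNReal.ofReal_mul hld.le,
      mul_inv_cancel₀ hld.ne', ENNReal.ofReal_one, one_smul]
  -- preimage of Q is unit cube
  have hQpre : A ⁻¹' Q = Q0 d := by
    ext y
    constructor
    · intro hy i _
      have h := hy i (Set.mem_univ i)
      rw [Set.mem_Icc, hA_apply] at h
      exact Set.mem_Icc.mpr ⟨by nlinarith [h.1], by nlinarith [h.2]⟩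
    · intro hy i _
      have h := Set.mem_Icc.mp (hy i (Set.mem_univ i))
      rw [Set.mem_Icc, hA_apply]
      exact ⟨by nlinarith [h.1], by nlinarith [h.2]⟩
  -- measures of preimages
  have hvol_pre : ∀ S : Set (Fin d → ℝ), MeasurableSet S →
      ENNReal.ofReal γ * volume Q ≤ volume S → ENNReal.ofReal γ' ≤ volume (A ⁻¹' S) := by
    intro S hS hvS
    rw [hpreim S hS]
    have h1 : ENNReal.ofReal γ' ≤ ENNReal.ofReal ((l^d)⁻¹) * (ENNReal.ofReal γ * volume Q) := by
      rw [hQvol, ← ENNReal.ofReal_mul (by positivity), ← ENNReal.ofReal_mul (by positivity)]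
      refine ENNReal.ofReal_le_ofReal ?_
      have heq : (l^d)⁻¹ * (γ * l^d) = γ := by field_simp
      rw [heq]
      exact min_le_left _ _
    exact le_trans h1 (mul_le_mul_right hvS _)
  -- eLpNorm change of variables
  have hg_cont : Continuous fun x : Fin d → ℝ => eval x P := MvPolynomial.continuous_eval P
  have heLp : ∀ S : Set (Fin d → ℝ), MeasurableSet S →
      eLpNorm (fun x => eval x P) p (volume.restrict S) =
        κ ^ (1/p).toReal * eLpNorm ((fun x => eval x P) ∘ A) p (volume.restrict (A ⁻¹' S)) := by
    intro S hS
    have hMPr : MeasurePreserving A ((κ • volume).restrict (A ⁻¹' S)) (volume.restrict S) :=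
      hMP.restrict_preimage hS
    have h1 : eLpNorm (fun x => eval x P) p (volume.restrict S) =
        eLpNorm ((fun x => eval x P) ∘ A) p ((κ • volume).restrict (A ⁻¹' S)) :=
      (eLpNorm_comp_measurePreserving hg_cont.aestronglyMeasurable.restrict hMPr).symm
    rw [h1, Measure.restrict_smul, eLpNorm_smul_measure_of_ne_zero hκ0, smul_eq_mul]
  -- representation of the composed polynomial
  set P' : MvPolynomial (Fin d) ℝ := aeval (fun i => MvPolynomial.C (x0 i) + MvPolynomial.C l * X i) P with hP'def
  have hP'deg : P'.totalDegree ≤ m := le_trans (totalDegree_comp_le d x0 l P) hPdeg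
  obtain ⟨c, hc⟩ := exists_rep d m P' hP'deg
  have hcomp : ((fun x => eval x P) ∘ A) = Phi d m c := by
    funext y
    have h1 : eval y P' = eval (A y) P := by
      rw [hP'def, ← aeval_eq_eval' y, comp_aeval_apply]
      have : (fun i => (aeval y) (C (x0 i) + C l * X i)) = A y := by
        funext i
        rw [map_add, map_mul, aeval_C, aeval_C, aeval_X, hA_apply]
        simp [Algebra.algebraMap_self]
      rw [this, aeval_eq_eval']
    simp only [Function.comp_apply]
    rw [← h1, hc y]
  -- assemble
  set κp : ℝ≥0∞ := κ ^ (1/p).toReal with hκpdef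
  have hκp0 : κp ≠ 0 := by
    rw [hκpdef]
    exact (ENNReal.rpow_pos (lt_of_le_of_ne zero_le (Ne.symm hκ0)) hκtop).ne'
  have hκptop : κp ≠ ⊤ := ENNReal.rpow_ne_top_of_nonneg (by positivity) hκtop
  rw [heLp F hFm, heLp E hEm, hcomp]
  have hmain : eLpNorm (Phi d m c) p (volume.restrict (A ⁻¹' F)) ≤
      ENNReal.ofReal Cst * eLpNorm (Phi d m c) p (volume.restrict (A ⁻¹' E)) :=
    hcube (A ⁻¹' E) (A ⁻¹' F) (hAmeas hEm) (hAmeas hFm)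
      (le_trans (Set.preimage_mono hEs) hQpre.subset)
      (le_trans (Set.preimage_mono hFs) hQpre.subset)
      (hvol_pre E hEm hEv) (hvol_pre F hFm hFv) c p hp
  calc κp * eLpNorm (Phi d m c) p (volume.restrict (A ⁻¹' F))
      ≤ κp * (ENNReal.ofReal Cst * eLpNorm (Phi d m c) p (volume.restrict (A ⁻¹' E))) :=
        mul_le_mul_right hmain _
  _ = ENNReal.ofReal Cst * (κp * eLpNorm (Phi d m c) p (volume.restrict (A ⁻¹' E))) := by ring
end

section
/- Let Ω ⊂ ℝ^d be a bounded Lipschitz domain, 1 < p < ∞, and A ∈ L^∞(Ω, ℝ^{d×d}) with A = Da for a Bilipschitz map a : Ω → ℝ^d. Suppose for every sequence (φ_k) ⊂ W^{1,p}_per,0(Y,ℝ^d) with ‖φ_k‖_{W^{1,p}} = 1 and ‖sym(Dφ_k A^{-1})‖_{L^p} → 0, weak compactness plus a compactness-type Korn inequality (‖u‖_{W^{1,p}} ≤ C(‖u‖_{L^p} + ‖sym(Du A^{-1})‖_{L^p})) forces a contradiction. Conclude: if φ ∈ W^{1,p}_loc(ℝ^d, ℝ^d) is Y-periodic with mean zero,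 A ∈ SFJ_per with Bilipschitz potential a, and sym(Dφ · A^{-1}) = 0 a.e., then φ = 0. -/
open MeasureTheory

noncomputable def Dmat {d : ℕ} (f : (Fin d → ℝ) → (Fin d → ℝ)) (y : Fin d → ℝ) :
    Matrix (Fin d) (Fin d) ℝ :=
  LinearMap.toMatrix' (fderiv ℝ f y).toLinearMap

def Ycell (d : ℕ) : Set (Fin d → ℝ) := Set.univ.pi fun _ => Set.Ico (0 : ℝ) 1

open Matrix in
private lemma skew_dot {d : ℕ} {M : Matrix (Fin d) (Fin d) ℝ} (h : M + M.transpose = 0)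
    (v : Fin d → ℝ) : M.mulVec v ⬝ᵥ v = 0 := by
  have h2 : M.transpose.mulVec v ⬝ᵥ v = M.mulVec v ⬝ᵥ v := by
    rw [Matrix.mulVec_transpose, ← Matrix.dotProduct_mulVec, dotProduct_comm]
  have h3 := congrArg (fun N : Matrix (Fin d) (Fin d) ℝ => N.mulVec v ⬝ᵥ v) h
  simp only [Matrix.add_mulVec, add_dotProduct, Matrix.zero_mulVec,
    zero_dotProduct] at h3
  linarith [h3, h2]

/-- Rigidity step of the periodic Korn inequality: let `A` be a periodic stress-free joint
(`Y`-periodic, bounded with bounded inverse, positive determinant, `A = Da` for a Bilipschitz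
homeomorphism `a` with `a 0 = 0`).  If `φ` is a `Y`-periodic map with zero mean over `Y`
satisfying `sym(Dφ · A⁻¹) = 0`, then `φ = 0`. -/
theorem stmt14 {d : ℕ} (L : ℝ) (hL : 1 ≤ L)
    (A : (Fin d → ℝ) → Matrix (Fin d) (Fin d) ℝ)
    (hper : ∀ (y : Fin d → ℝ) (k : Fin d → ℤ), A (y + (fun i => (k i : ℝ))) = A y)
    (hAbound : ∀ y, (∀ i j, |A y i j| ≤ L) ∧ (∀ i j, |(A y)⁻¹ i j| ≤ L))
    (hAdet : ∀ y, 0 < (A y).det)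
    (a : (Fin d → ℝ) → (Fin d → ℝ))
    (hcont : Continuous a) (ha0 : a 0 = 0) (hdiff : Differentiable ℝ a)
    (hDa : ∀ y, Dmat a y = A y)
    (hlip : LipschitzWith L.toNNReal a) (hanti : AntilipschitzWith L.toNNReal a)
    (hbij : Function.Bijective a)
    (φ : (Fin d → ℝ) → (Fin d → ℝ)) (hφdiff : Differentiable ℝ φ)
    (hφper : ∀ (y : Fin d → ℝ) (k : Fin d → ℤ), φ (y + (fun i => (k i : ℝ))) = φ y)
    (hφmean : ∀ i, (∫ y in Ycell d, φ y i) = 0)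
    (hsym : ∀ y, symMat (Dmat φ y * (A y)⁻¹) = 0) :
    ∀ y, φ y = 0 := by
  classical
  open Matrix in
  -- notation
  set e : (Fin d → ℝ) ≃ (Fin d → ℝ) := Equiv.ofBijective a hbij with he
  have hea : ∀ x, a (e.symm x) = x := fun x => e.apply_symm_apply x
  have hae : ∀ y, e.symm (a y) = y := fun y => e.symm_apply_apply y
  -- determinants are units
  have hunit : ∀ y, IsUnit (A y).det := fun y => isUnit_iff_ne_zero.2 (hAdet y).ne'
  have hInv : ∀ y, Invertible (A y) := fun y => (A y).invertibleOfIsUnitDet (hunit y)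
  -- fderiv of a as a linear map is toLin' (A y)
  have hlinA : ∀ y, (fderiv ℝ a y).toLinearMap = Matrix.toLin' (A y) := by
    intro y
    rw [← hDa y]
    simp [Dmat, Matrix.toLin'_toMatrix']
  have hlinφ : ∀ y, (fderiv ℝ φ y).toLinearMap = Matrix.toLin' (Dmat φ y) := by
    intro y; simp [Dmat, Matrix.toLin'_toMatrix']
  -- fderiv of a depends only on A
  have hfderiv_eq : ∀ y z, A y = A z → fderiv ℝ a y = fderiv ℝ a z := by
    intro y z h
    apply ContinuousLinearMap.coe_injective
    rw [hlinA y, hlinA z, h]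
  -- additivity of a over the lattice
  have hadd : ∀ (y : Fin d → ℝ) (k : Fin d → ℤ),
      a (y + (fun i => (k i : ℝ))) = a y + a (fun i => (k i : ℝ)) := by
    intro y k
    set kv : Fin d → ℝ := fun i => (k i : ℝ) with hkv
    have hshift : ∀ z, HasFDerivAt (fun w => a (w + kv)) (fderiv ℝ a (z + kv)) z := by
      intro z
      have h1 : HasFDerivAt (fun w : Fin d → ℝ => w + kv)
          (ContinuousLinearMap.id ℝ (Fin d → ℝ)) z := (hasFDerivAt_id z).add_const kv
      have h2 := ((hdiff (z + kv)).hasFDerivAt).comp z h1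
      simpa using h2
    have hdz : ∀ z, HasFDerivAt (fun w => a (w + kv) - a w) (0 : (Fin d → ℝ) →L[ℝ] (Fin d → ℝ)) z := by
      intro z
      have h3 := (hshift z).sub (hdiff z).hasFDerivAt
      have h4 : fderiv ℝ a (z + kv) = fderiv ℝ a z := hfderiv_eq _ _ (hper z k)
      rw [h4, sub_self] at h3
      exact h3
    have hconst := is_const_of_fderiv_eq_zero (𝕜 := ℝ)
      (f := fun w => a (w + kv) - a w)
      (fun z => (hdz z).differentiableAt) (fun z => (hdz z).fderiv) y 0
    have : a (y + kv) - a y = a kv - a 0 := by simpa using hconst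
    rw [ha0, sub_zero] at this
    linear_combination (norm := module) this
  -- the map ψ = φ ∘ a⁻¹
  set ψ : (Fin d → ℝ) → (Fin d → ℝ) := fun x => φ (e.symm x) with hψdef
  have hψa : ∀ y, ψ (a y) = φ y := fun y => by rw [hψdef]; simp [hae y]
  -- a⁻¹ is Lipschitz, hence continuous
  have hginv : LipschitzWith L.toNNReal (⇑e.symm) := by
    apply LipschitzWith.of_dist_le_mul
    intro x₁ x₂
    have := hanti.le_mul_dist (e.symm x₁) (e.symm x₂)
    rwa [hea, hea] at this
  -- derivative of ψ
  have hkey : ∀ x, ∃ D : (Fin d → ℝ) →L[ℝ] (Fin d → ℝ),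
      HasFDerivAt ψ D x ∧ ∀ v, D v ⬝ᵥ v = 0 := by
    intro x
    set y := e.symm x with hy
    set E : (Fin d → ℝ) ≃L[ℝ] (Fin d → ℝ) :=
      ((A y).toLinearEquiv' (hInv y)).toContinuousLinearEquiv with hE
    have hEcoe : (E : (Fin d → ℝ) →L[ℝ] (Fin d → ℝ)) = fderiv ℝ a y := by
      apply ContinuousLinearMap.coe_injective
      rw [hlinA y]
      ext v
      simp [hE, Matrix.toLinearEquiv']
    have hfa : HasFDerivAt a (E : (Fin d → ℝ) →L[ℝ] (Fin d → ℝ)) y := by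
      rw [hEcoe]; exact (hdiff y).hasFDerivAt
    have hg : HasFDerivAt (⇑e.symm) (E.symm : (Fin d → ℝ) →L[ℝ] (Fin d → ℝ)) x :=
      HasFDerivAt.of_local_left_inverse (f := a) (f' := E) (g := ⇑e.symm)
        (hginv.continuous.continuousAt) hfa (Filter.Eventually.of_forall hea)
    refine ⟨(fderiv ℝ φ y).comp (E.symm : (Fin d → ℝ) →L[ℝ] (Fin d → ℝ)), ?_, ?_⟩
    · have := ((hφdiff y).hasFDerivAt).comp x hg
      exact this
    · intro v
      set u := E.symm v with hu
      have hv : v = (A y).mulVec u := by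
        have : E u = v := E.apply_symm_apply v
        rw [← this]
        simp [hE, Matrix.toLinearEquiv', Matrix.toLin'_apply]
      have happ : (fderiv ℝ φ y) u = (Dmat φ y).mulVec u := by
        have := congrArg (fun (l : (Fin d → ℝ) →ₗ[ℝ] (Fin d → ℝ)) => l u) (hlinφ y)
        simpa [Matrix.toLin'_apply] using this
      have hMskew : (Dmat φ y * (A y)⁻¹) + (Dmat φ y * (A y)⁻¹).transpose = 0 := by
        have h0 := hsym y
        rw [symMat] at h0
        have := congrArg (fun M => (2 : ℝ) • M) h0
        simpa [smul_smul] using this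
      have hfact : Dmat φ y = (Dmat φ y * (A y)⁻¹) * (A y) := by
        rw [Matrix.mul_assoc, Matrix.nonsing_inv_mul _ (hunit y), Matrix.mul_one]
      calc ((fderiv ℝ φ y).comp (E.symm : (Fin d → ℝ) →L[ℝ] (Fin d → ℝ))) v ⬝ᵥ v
          = (Dmat φ y).mulVec u ⬝ᵥ v := by
            rw [← happ]; rfl
        _ = (Dmat φ y * (A y)⁻¹).mulVec ((A y).mulVec u) ⬝ᵥ ((A y).mulVec u) := by
            rw [Matrix.mulVec_mulVec, ← hfact, hv]
        _ = 0 := skew_dot hMskew _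
  -- ψ(x+v)·v = ψ(x)·v
  have hline : ∀ x v : Fin d → ℝ, ψ (x + v) ⬝ᵥ v = ψ x ⬝ᵥ v := by
    intro x v
    set F : ℝ → ℝ := fun t => ψ (x + t • v) ⬝ᵥ v with hF
    have hFd : ∀ t : ℝ, HasDerivAt F 0 t := by
      intro t
      obtain ⟨D, hD, hD0⟩ := hkey (x + t • v)
      have hc : HasDerivAt (fun s : ℝ => x + s • v) v t := by
        have := ((hasDerivAt_id t).smul_const v).const_add x
        simpa using this
      have hψc : HasDerivAt (fun s : ℝ => ψ (x + s • v)) (D v) t := by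
        have := hD.comp_hasDerivAt t hc; exact this
      have hcomp := hasDerivAt_pi.1 hψc
      have hsum : HasDerivAt F (∑ i, D v i * v i) t := by
        have := HasDerivAt.fun_sum (u := Finset.univ)
          (A := fun (i : Fin d) (s : ℝ) => ψ (x + s • v) i * v i)
          (A' := fun i => D v i * v i)
          (fun i _ => (hcomp i).mul_const (v i))
        exact this
      have : (∑ i, D v i * v i) = 0 := hD0 v
      rwa [this] at hsum
    have hc := is_const_of_deriv_eq_zero (𝕜 := ℝ) (f := F)
      (fun t => (hFd t).differentiableAt) (fun t => (hFd t).deriv) 1 0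
    simpa [hF] using hc
  -- difference quadratic identity
  have hq : ∀ x v : Fin d → ℝ, (ψ (x + v) - ψ x) ⬝ᵥ v = 0 := by
    intro x v
    rw [sub_dotProduct, hline x v, sub_self]
  -- antisymmetry
  have hB : ∀ x u v : Fin d → ℝ,
      (ψ (x + u) - ψ x) ⬝ᵥ v + (ψ (x + v) - ψ x) ⬝ᵥ u = 0 := by
    intro x u v
    have h1 := hq x (u + v)
    have h2 := hq (x + u) v
    have h3 := hq (x + v) u
    have e1 : x + (u + v) = x + u + v := by abel
    have e2 : x + v + u = x + u + v := by abel
    rw [e1] at h1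
    rw [e2] at h3
    simp only [sub_dotProduct, dotProduct_add] at h1 h2 h3 ⊢
    linarith
  -- ψ is periodic with respect to the lattice a(ℤ^d)
  have hψper : ∀ (x : Fin d → ℝ) (k : Fin d → ℤ), ψ (x + a (fun i => (k i : ℝ))) = ψ x := by
    intro x k
    have hx : x = a (e.symm x) := (hea x).symm
    rw [hx, ← hadd (e.symm x) k, hψa, hψa, hφper]
  -- perpendicularity to the lattice
  have hperp : ∀ (x v : Fin d → ℝ) (k : Fin d → ℤ),
      (ψ (x + v) - ψ x) ⬝ᵥ a (fun i => (k i : ℝ)) = 0 := by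
    intro x v k
    have h5 := hB x (a (fun i => (k i : ℝ))) v
    rw [hψper x k] at h5
    rw [sub_self, zero_dotProduct, zero_add] at h5
    exact h5
  -- conclude ψ is constant
  have hψconst : ∀ x v : Fin d → ℝ, ψ (x + v) = ψ x := by
    intro x v
    by_contra hne
    set w : Fin d → ℝ := ψ (x + v) - ψ x with hw
    have hwne : w ≠ 0 := fun h => hne (by rwa [hw, sub_eq_zero] at h)
    set C : ℝ := L * ∑ i, |w i| with hC
    have hCnn : 0 ≤ C := by
      apply mul_nonneg (le_trans zero_le_one hL)
      exact Finset.sum_nonneg fun i _ => abs_nonneg _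
    -- boundedness of w ⬝ a u over all u
    have hbound : ∀ u : Fin d → ℝ, |w ⬝ᵥ a u| ≤ C := by
      intro u
      set k : Fin d → ℤ := fun i => ⌊u i⌋ with hk
      set z : Fin d → ℝ := fun i => Int.fract (u i) with hz
      have hzk : z + (fun i => (k i : ℝ)) = u := by
        funext i
        show z i + (k i : ℝ) = u i
        simp only [hz, hk]
        rw [Int.fract]
        ring
      have hzau : w ⬝ᵥ a u = w ⬝ᵥ a z := by
        rw [← hzk, hadd z k, dotProduct_add]
        have := hperp x v k
        rw [← hw] at this
        rw [this, add_zero]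
      have haz : ‖a z‖ ≤ L := by
        have h1 : dist (a z) (a 0) ≤ L.toNNReal * dist z 0 := hlip.dist_le_mul z 0
        have h2 : dist z (0 : Fin d → ℝ) ≤ 1 := by
          rw [dist_zero_right]
          apply pi_norm_le_iff_of_nonneg zero_le_one |>.2
          intro i
          rw [Real.norm_eq_abs]
          have := Int.fract_nonneg (u i)
          have h3 := Int.fract_lt_one (u i)
          simp only [hz]
          rw [abs_of_nonneg this]
          linarith
        have hLcoe : (L.toNNReal : ℝ) = L := Real.coe_toNNReal L (le_trans zero_le_one hL)
        rw [ha0, dist_zero_right] at h1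
        calc ‖a z‖ ≤ L.toNNReal * dist z 0 := h1
          _ = L * dist z 0 := by rw [hLcoe]
          _ ≤ L * 1 := by
              apply mul_le_mul_of_nonneg_left h2 (le_trans zero_le_one hL)
          _ = L := mul_one L
      rw [hzau]
      calc |w ⬝ᵥ a z| ≤ ∑ i, |w i * a z i| := Finset.abs_sum_le_sum_abs _ _
        _ ≤ ∑ i, |w i| * L := by
            apply Finset.sum_le_sum
            intro i _
            rw [abs_mul]
            apply mul_le_mul_of_nonneg_left _ (abs_nonneg _)
            calc |a z i| ≤ ‖a z‖ := by
                  have := norm_le_pi_norm (a z) i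
                  simpa [Real.norm_eq_abs] using this
              _ ≤ L := haz
        _ = C := by rw [← Finset.sum_mul, mul_comm, hC]
    -- w ⬝ w > 0
    have hww : 0 < w ⬝ᵥ w := by
      obtain ⟨i, hi⟩ := Function.ne_iff.1 hwne
      apply Finset.sum_pos'
      · intro j _; exact mul_self_nonneg (w j)
      · exact ⟨i, Finset.mem_univ i, mul_self_pos.2 (by simpa using hi)⟩
    -- contradiction: pick u with a u = t • w
    set t : ℝ := (C + 1) / (w ⬝ᵥ w) with ht
    have hcontra := hbound (e.symm (t • w))
    rw [hea] at hcontra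
    have : w ⬝ᵥ (t • w) = C + 1 := by
      rw [dotProduct_smul, smul_eq_mul, ht, div_mul_cancel₀ _ hww.ne']
    rw [this, abs_of_nonneg (by linarith)] at hcontra
    linarith
  have hψc : ∀ x, ψ x = ψ 0 := by
    intro x
    have := hψconst 0 x
    simpa using this
  -- φ is constant
  have hφc : ∀ y, φ y = φ 0 := by
    intro y
    rw [← hψa y, ← hψa 0, hψc (a y), hψc (a 0)]
  -- volume of the cell is 1
  have hvol : volume (Ycell d) = 1 := by
    rw [Ycell, volume_pi_pi]
    simp [Real.volume_Ico]
  -- the mean zero condition forces φ 0 = 0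
  have hφ0 : φ 0 = 0 := by
    funext i
    have h1 : (∫ y in Ycell d, φ y i) = φ 0 i := by
      have h2 : (fun y : Fin d → ℝ => φ y i) = fun _ => φ 0 i := funext fun y => by rw [hφc y]
      rw [h2, setIntegral_const, measureReal_def, hvol]
      simp
    have h2 := hφmean i
    rw [h1] at h2
    simpa using h2
  intro y
  rw [hφc y, hφ0]
end

section
/- Let a : ℝ^d → ℝ^d be a continuous open map (images of open sets are open) that is injective almost everywhere, in the sense that for a.e. z ∈ ℝ^d the preimage a^{-1}{z} has at most one point. Then a is injective everywhere. -/
open MeasureTheory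

/-- A continuous open map `ℝ^d → ℝ^d` that is injective almost everywhere (for a.e. `z` the
fiber `a⁻¹{z}` has at most one point) is injective everywhere. -/
theorem stmt19 {d : ℕ} (a : (Fin d → ℝ) → (Fin d → ℝ))
    (hcont : Continuous a) (hopen : IsOpenMap a)
    (hinj : ∀ᵐ z : Fin d → ℝ, (a ⁻¹' {z}).Subsingleton) :
    Function.Injective a := by
  intro x y hxy
  by_contra hne
  set δ : ℝ := dist x y / 2 with hδ
  have hδpos : 0 < δ := by
    have := dist_pos.2 hne
    positivity
  set O := a '' Metric.ball x δ ∩ a '' Metric.ball y δ with hOdef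
  have hO : IsOpen O :=
    (hopen _ Metric.isOpen_ball).inter (hopen _ Metric.isOpen_ball)
  have hmem : a x ∈ O :=
    ⟨⟨x, Metric.mem_ball_self hδpos, rfl⟩, ⟨y, Metric.mem_ball_self hδpos, hxy.symm⟩⟩
  have hpos : 0 < volume O := hO.measure_pos volume ⟨_, hmem⟩
  have hsub : O ⊆ {z | ¬ (a ⁻¹' {z}).Subsingleton} := by
    rintro z ⟨⟨u, hu, hu'⟩, ⟨v, hv, hv'⟩⟩ hs
    have huv : u = v := hs (by simp [hu']) (by simp [hv'])
    subst huv
    have : dist x y ≤ dist x u + dist u y := dist_triangle _ _ _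
    have h1 : dist x u < δ := by have := Metric.mem_ball.mp hu; rwa [dist_comm] at this
    have h2 : dist u y < δ := Metric.mem_ball.mp hv
    linarith
  have hnull : volume {z | ¬ (a ⁻¹' {z}).Subsingleton} = 0 := hinj
  have : volume O = 0 := measure_mono_null hsub hnull
  exact hpos.ne' this
end
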